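/- Every bipartite graph G = (V, W) in which every vertex of V has finite degree defines a finitary transversal matroid: the set system on V whose independent sets are the matchable subsets of V is a matroid, and a set is independent if and only if all its finite subsets are. -/

import Mathlib

open Set

section Bipartite

variable {V W : Type*}

/-- `m` is a matching in the bipartite graph with edge set `E ⊆ V × W`. -/
def IsBipMatching (E m : Set (V × W)) : Prop :=
  m ⊆ E ∧ ∀ p ∈ m, ∀ q ∈ m, (p.1 = q.1 ∨ p.2 = q.2) → p = q

/-- `I ⊆ V` is matchable in the bipartite graph with edge set `E`. -/
def Matchable (E : Set (V × W)) (I : Set V) : Prop :=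
  ∃ m, IsBipMatching E m ∧ Prod.fst '' m = I

/-- One step along an edge of `F` in the bipartite graph, on vertex type `V ⊕ W`. -/
def bipStep (F : Set (V × W)) : (V ⊕ W) → (V ⊕ W) → Prop := fun a b =>
  match a, b with
  | Sum.inl v, Sum.inr w => (v, w) ∈ F
  | Sum.inr w, Sum.inl v => (v, w) ∈ F
  | _, _ => False

/-- Every connected component of the bipartite graph with edge set `F` is finite. -/
def FiniteComponents (F : Set (V × W)) : Prop :=
  ∀ x : V ⊕ W, {y | Relation.ReflTransGen (bipStep F) x y}.Finite

/-- `m` is an `m0`-matching: a matching such that every component of `m0 ∪ m` is finite. -/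
def IsM0Matching (E m0 m : Set (V × W)) : Prop :=
  IsBipMatching E m ∧ FiniteComponents (m0 ∪ m)

/-- `I` is `m0`-matchable. -/
def M0Matchable (E m0 : Set (V × W)) (I : Set V) : Prop :=
  ∃ m, IsM0Matching E m0 m ∧ Prod.fst '' m = I

/-- `I` is `m0`-matchable onto `W'`. -/
def M0MatchableOnto (E m0 : Set (V × W)) (I : Set V) (W' : Set W) : Prop :=
  ∃ m, IsM0Matching E m0 m ∧ Prod.fst '' m = I ∧ Prod.snd '' m = W'

end Bipartite

section Star

variable {V : Type*}

/-- The edge set of the converted bimaze of the dimaze `(D, B0)`: the right class is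
`{v ∣ v ∉ B0}` (representing `(V \ B0)⋆`) and the edges are the identity matching
together with `v u⋆` for every edge `(u, v)` of `D`. -/
def starEdges (D : V → V → Prop) (B0 : Set V) : Set (V × V) :=
  {p | (p.1 = p.2 ∧ p.2 ∉ B0) ∨ (D p.2 p.1 ∧ p.2 ∉ B0)}

/-- The identity matching of the converted bimaze. -/
def starM0 (B0 : Set V) : Set (V × V) := {p | p.1 = p.2 ∧ p.1 ∉ B0}

end Star


section TransversalProof

variable {V W : Type*} {E : Set (V × W)}

/-- The neighborhood of a finite set of left vertices. -/
noncomputable def nbhd (hlf : ∀ v : V, {w | (v, w) ∈ E}.Finite) [DecidableEq W]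
    (S : Finset V) : Finset W :=
  S.biUnion fun v => (hlf v).toFinset

lemma nbhd_union (hlf : ∀ v : V, {w | (v, w) ∈ E}.Finite) [DecidableEq W] (S T : Finset V)
    [DecidableEq V] : nbhd hlf (S ∪ T) = nbhd hlf S ∪ nbhd hlf T := by
  ext w
  simp only [nbhd, Finset.mem_biUnion, Finset.mem_union]
  constructor
  · rintro ⟨v, h | h, hw⟩
    · exact Or.inl ⟨v, h, hw⟩
    · exact Or.inr ⟨v, h, hw⟩
  · rintro (⟨v, h, hw⟩ | ⟨v, h, hw⟩)
    · exact ⟨v, Or.inl h, hw⟩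
    · exact ⟨v, Or.inr h, hw⟩

lemma nbhd_mono (hlf : ∀ v : V, {w | (v, w) ∈ E}.Finite) [DecidableEq W] {S T : Finset V}
    (h : S ⊆ T) : nbhd hlf S ⊆ nbhd hlf T :=
  Finset.biUnion_subset_biUnion_of_subset_left _ h

lemma matchable_iff_inj {I : Set V} :
    Matchable E I ↔ ∃ f : I → W, Function.Injective f ∧ ∀ v : I, ((v : V), f v) ∈ E := by
  constructor
  · rintro ⟨m, ⟨hmE, hm⟩, rfl⟩
    have hv : ∀ v : Prod.fst '' m, ∃ w, ((v : V), w) ∈ m := by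
      rintro ⟨v, hv⟩
      obtain ⟨p, hp, rfl⟩ := hv
      exact ⟨p.2, by simpa using hp⟩
    choose f hf using hv
    refine ⟨f, ?_, fun v => hmE (hf v)⟩
    intro a b hab
    have := hm _ (hf a) _ (hf b) (Or.inr hab)
    exact Subtype.ext (congrArg Prod.fst this)
  · rintro ⟨f, hinj, hf⟩
    refine ⟨(fun v : I => ((v : V), f v)) '' Set.univ, ⟨?_, ?_⟩, ?_⟩
    · rintro p ⟨v, -, rfl⟩; exact hf v
    · rintro p ⟨a, -, rfl⟩ q ⟨b, -, rfl⟩ (h | h)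
      · have : a = b := Subtype.ext h
        rw [this]
      · have : a = b := hinj h
        rw [this]
    · rw [Set.image_image]
      simp [Subtype.range_coe]

lemma Matchable.mono {I J : Set V} (h : Matchable E J) (hIJ : I ⊆ J) : Matchable E I := by
  rw [matchable_iff_inj] at h ⊢
  obtain ⟨f, hinj, hf⟩ := h
  refine ⟨fun v => f ⟨v, hIJ v.2⟩, ?_, fun v => hf ⟨v, hIJ v.2⟩⟩
  intro a b hab
  have h2 : (⟨(a : V), hIJ a.2⟩ : J) = ⟨(b : V), hIJ b.2⟩ := hinj hab
  exact Subtype.ext (by simpa using congrArg Subtype.val h2)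

lemma matchable_empty : Matchable E (∅ : Set V) :=
  ⟨∅, ⟨Set.empty_subset _, by simp⟩, by simp⟩

lemma card_le_nbhd_of_matchable [DecidableEq W] (hlf : ∀ v : V, {w | (v, w) ∈ E}.Finite)
    {I : Set V} (h : Matchable E I) (S : Finset V) (hS : ↑S ⊆ I) :
    S.card ≤ (nbhd hlf S).card := by
  rw [matchable_iff_inj] at h
  obtain ⟨f, hinj, hf⟩ := h
  have key := Finset.card_le_card_of_injOn
    (f := fun v : {x // x ∈ S} => f ⟨v.1, hS v.2⟩)
    (s := S.attach) (t := nbhd hlf S) ?_ ?_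
  · simpa using key
  · intro v _
    exact Finset.mem_biUnion.2 ⟨v.1, v.2, (hlf _).mem_toFinset.2 (hf ⟨v.1, hS v.2⟩)⟩
  · intro a _ b _ hab
    have h2 : (⟨(a : V), hS a.2⟩ : I) = ⟨(b : V), hS b.2⟩ := hinj hab
    exact Subtype.ext (by simpa using congrArg Subtype.val h2)

lemma matchable_of_hall [DecidableEq W] (hlf : ∀ v : V, {w | (v, w) ∈ E}.Finite) {I : Finset V}
    (h : ∀ S ⊆ I, S.card ≤ (nbhd hlf S).card) :
    Matchable E (↑I : Set V) := by
  classical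
  have hall : ∀ s : Finset (↑I : Set V),
      s.card ≤ (s.biUnion fun v : (↑I : Set V) => (hlf v.1).toFinset).card := by
    intro s
    have hsub : s.image Subtype.val ⊆ I := by
      intro x hx
      obtain ⟨⟨y, hy⟩, -, rfl⟩ := Finset.mem_image.1 hx
      exact Finset.mem_coe.1 hy
    have h2 := h (s.image Subtype.val) hsub
    rwa [Finset.card_image_of_injective _ Subtype.val_injective, nbhd,
      Finset.image_biUnion] at h2
  obtain ⟨f, hinj, hf⟩ := (Finset.all_card_le_biUnion_card_iff_exists_injective
      (fun v : (↑I : Set V) => (hlf v.1).toFinset)).1 hall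
  exact matchable_iff_inj.2 ⟨f, hinj, fun v => (hlf _).mem_toFinset.1 (hf v)⟩

lemma tight_union [DecidableEq W] (hlf : ∀ v : V, {w | (v, w) ∈ E}.Finite)
    {I : Set V} (hI : Matchable E I) {S₁ S₂ : Finset V} [DecidableEq V]
    (h1 : ↑S₁ ⊆ I) (h2 : ↑S₂ ⊆ I)
    (ht1 : (nbhd hlf S₁).card ≤ S₁.card) (ht2 : (nbhd hlf S₂).card ≤ S₂.card) :
    (nbhd hlf (S₁ ∪ S₂)).card ≤ (S₁ ∪ S₂).card := by
  have hunion : nbhd hlf (S₁ ∪ S₂) = nbhd hlf S₁ ∪ nbhd hlf S₂ := nbhd_union hlf S₁ S₂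
  have hinter : nbhd hlf (S₁ ∩ S₂) ⊆ nbhd hlf S₁ ∩ nbhd hlf S₂ := by
    intro w hw
    obtain ⟨v, hv, hw⟩ := Finset.mem_biUnion.1 hw
    exact Finset.mem_inter.2 ⟨Finset.mem_biUnion.2 ⟨v, (Finset.mem_inter.1 hv).1, hw⟩,
      Finset.mem_biUnion.2 ⟨v, (Finset.mem_inter.1 hv).2, hw⟩⟩
  have hci : (nbhd hlf (S₁ ∩ S₂)).card ≤ (nbhd hlf S₁ ∩ nbhd hlf S₂).card :=
    Finset.card_le_card hinter
  have hNsum : (nbhd hlf S₁ ∪ nbhd hlf S₂).card + (nbhd hlf S₁ ∩ nbhd hlf S₂).card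
      = (nbhd hlf S₁).card + (nbhd hlf S₂).card := Finset.card_union_add_card_inter _ _
  have hSsum : (S₁ ∪ S₂).card + (S₁ ∩ S₂).card = S₁.card + S₂.card :=
    Finset.card_union_add_card_inter _ _
  have hhu : (S₁ ∪ S₂).card ≤ (nbhd hlf (S₁ ∪ S₂)).card :=
    card_le_nbhd_of_matchable hlf hI _ (by
      rw [Finset.coe_union]; exact Set.union_subset h1 h2)
  have hhi : (S₁ ∩ S₂).card ≤ (nbhd hlf (S₁ ∩ S₂)).card :=
    card_le_nbhd_of_matchable hlf hI _ (by
      intro x hx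
      exact h1 (Finset.mem_coe.2 (Finset.mem_inter.1 (Finset.mem_coe.1 hx)).1))
  rw [hunion] at hhu
  rw [hunion]
  omega

lemma matchable_aug [DecidableEq V] [DecidableEq W] (hlf : ∀ v : V, {w | (v, w) ∈ E}.Finite)
    {I J : Finset V} (hI : Matchable E (↑I : Set V)) (hJ : Matchable E (↑J : Set V))
    (hcard : I.card < J.card) :
    ∃ e ∈ J, e ∉ I ∧ Matchable E (↑(insert e I) : Set V) := by
  by_contra hcon
  push_neg at hcon
  -- for each e ∈ J \ I, find a tight subset of I whose neighborhood contains nbhd {e}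
  have key : ∀ e : V, ∃ S : Finset V, e ∈ J \ I →
      ↑S ⊆ (↑I : Set V) ∧ (nbhd hlf S).card ≤ S.card ∧ (hlf e).toFinset ⊆ nbhd hlf S := by
    intro e
    by_cases he : e ∈ J \ I
    swap
    · exact ⟨∅, fun h => absurd h he⟩
    obtain ⟨heJ, heI⟩ := Finset.mem_sdiff.1 he
    have hnm : ¬ Matchable E (↑(insert e I) : Set V) := hcon e heJ heI
    have hhall : ¬ ∀ S ⊆ insert e I, S.card ≤ (nbhd hlf S).card := fun h =>
      hnm (matchable_of_hall hlf h)
    push_neg at hhall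
    obtain ⟨S, hSsub, hSlt⟩ := hhall
    have heS : e ∈ S := by
      by_contra heS
      have hsub : ↑S ⊆ (↑I : Set V) := by
        intro x hx
        have hx' := hSsub (Finset.mem_coe.1 hx)
        rcases Finset.mem_insert.1 hx' with rfl | hx''
        · exact absurd (Finset.mem_coe.1 hx) heS
        · exact Finset.mem_coe.2 hx''
      exact absurd (card_le_nbhd_of_matchable hlf hI S hsub) (not_le.2 hSlt)
    have hS'sub : ↑(S.erase e) ⊆ (↑I : Set V) := by
      intro x hx
      have hxS : x ∈ S := Finset.mem_of_mem_erase (Finset.mem_coe.1 hx)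
      have hxne : x ≠ e := Finset.ne_of_mem_erase (Finset.mem_coe.1 hx)
      rcases Finset.mem_insert.1 (hSsub hxS) with rfl | hx''
      · exact absurd rfl hxne
      · exact Finset.mem_coe.2 hx''
    have hcards : (S.erase e).card + 1 = S.card := Finset.card_erase_add_one heS
    have hhallS' : (S.erase e).card ≤ (nbhd hlf (S.erase e)).card :=
      card_le_nbhd_of_matchable hlf hI _ hS'sub
    have hsubN : nbhd hlf (S.erase e) ⊆ nbhd hlf S := nbhd_mono hlf (Finset.erase_subset _ _)
    have hNcard : (nbhd hlf S).card ≤ (nbhd hlf (S.erase e)).card := by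
      have := Finset.card_le_card hsubN
      omega
    have hEq : nbhd hlf (S.erase e) = nbhd hlf S :=
      Finset.eq_of_subset_of_card_le hsubN hNcard
    have hceq : (nbhd hlf (S.erase e)).card = (nbhd hlf S).card := by rw [hEq]
    refine ⟨S.erase e, fun _ => ⟨hS'sub, by omega, ?_⟩⟩
    rw [hEq]
    intro w hw
    exact Finset.mem_biUnion.2 ⟨e, heS, hw⟩
  choose g hg using key
  -- the union of the tight sets is tight
  have acc : ∀ A : Finset V, A ⊆ J \ I →
      ↑(A.biUnion g) ⊆ (↑I : Set V) ∧ (nbhd hlf (A.biUnion g)).card ≤ (A.biUnion g).card := by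
    intro A
    induction A using Finset.induction_on with
    | empty => intro _; simp [nbhd]
    | @insert a A' hA ih =>
      intro hsub
      have haJ : a ∈ J \ I := hsub (Finset.mem_insert_self _ _)
      have hsub' : A' ⊆ J \ I := fun x hx => hsub (Finset.mem_insert_of_mem hx)
      obtain ⟨h1, h2, _⟩ := hg a haJ
      obtain ⟨ih1, ih2⟩ := ih hsub'
      rw [Finset.biUnion_insert]
      constructor
      · rw [Finset.coe_union]
        exact Set.union_subset h1 ih1
      · exact tight_union hlf hI h1 ih1 h2 ih2
  obtain ⟨hTsub, hTtight⟩ := acc (J \ I) (le_refl _)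
  have hTI : (J \ I).biUnion g ⊆ I := by
    intro x hx
    exact Finset.mem_coe.1 (hTsub (Finset.mem_coe.2 hx))
  have hte : ∀ e ∈ J \ I, (hlf e).toFinset ⊆ nbhd hlf ((J \ I).biUnion g) := by
    intro e he
    exact ((hg e he).2.2).trans (nbhd_mono hlf (Finset.subset_biUnion_of_mem g he))
  -- final counting
  have hUJ : ↑((J \ I) ∪ ((J \ I).biUnion g ∩ J)) ⊆ (↑J : Set V) := by
    intro x hx
    rcases Finset.mem_union.1 (Finset.mem_coe.1 hx) with h | h
    · exact Finset.mem_coe.2 (Finset.mem_sdiff.1 h).1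
    · exact Finset.mem_coe.2 (Finset.mem_inter.1 h).2
  have hhallU : ((J \ I) ∪ ((J \ I).biUnion g ∩ J)).card
      ≤ (nbhd hlf ((J \ I) ∪ ((J \ I).biUnion g ∩ J))).card :=
    card_le_nbhd_of_matchable hlf hJ _ hUJ
  have hNU : nbhd hlf ((J \ I) ∪ ((J \ I).biUnion g ∩ J)) ⊆ nbhd hlf ((J \ I).biUnion g) := by
    intro w hw
    obtain ⟨v, hv, hw⟩ := Finset.mem_biUnion.1 hw
    rcases Finset.mem_union.1 hv with h | h
    · exact hte v h hw
    · exact Finset.mem_biUnion.2 ⟨v, (Finset.mem_inter.1 h).1, hw⟩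
  have hNUcard : (nbhd hlf ((J \ I) ∪ ((J \ I).biUnion g ∩ J))).card
      ≤ ((J \ I).biUnion g).card := (Finset.card_le_card hNU).trans hTtight
  have hdisj : Disjoint (J \ I) ((J \ I).biUnion g ∩ J) := by
    rw [Finset.disjoint_left]
    intro x hx hx'
    exact (Finset.mem_sdiff.1 hx).2 (hTI (Finset.mem_inter.1 hx').1)
  have hUcard : ((J \ I) ∪ ((J \ I).biUnion g ∩ J)).card
      = (J \ I).card + ((J \ I).biUnion g ∩ J).card := Finset.card_union_of_disjoint hdisj
  have hTcard : ((J \ I).biUnion g ∩ J).card + ((J \ I).biUnion g \ J).card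
      = ((J \ I).biUnion g).card := Finset.card_inter_add_card_sdiff _ _
  have hTJ : ((J \ I).biUnion g \ J).card ≤ (I \ J).card :=
    Finset.card_le_card (Finset.sdiff_subset_sdiff hTI (le_refl _))
  have hIcard : (I ∩ J).card + (I \ J).card = I.card := Finset.card_inter_add_card_sdiff _ _
  have hJcard : (J ∩ I).card + (J \ I).card = J.card := Finset.card_inter_add_card_sdiff _ _
  have hic : (I ∩ J).card = (J ∩ I).card := by rw [Finset.inter_comm]
  omega

lemma matchable_compact (hlf : ∀ v : V, {w | (v, w) ∈ E}.Finite) (I : Set V)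
    (h : ∀ J ⊆ I, J.Finite → Matchable E J) : Matchable E I := by
  classical
  rw [matchable_iff_inj]
  have hall : ∀ s : Finset I, s.card ≤ (s.biUnion fun v : I => (hlf v.1).toFinset).card := by
    intro s
    have hJ : Matchable E (Subtype.val '' (↑s : Set I)) := by
      refine h _ ?_ ((s.finite_toSet).image _)
      rintro x ⟨v, -, rfl⟩
      exact v.2
    have hS : ↑(s.image Subtype.val) ⊆ Subtype.val '' (↑s : Set I) := by
      rw [Finset.coe_image]
    have h2 := card_le_nbhd_of_matchable hlf hJ (s.image Subtype.val) hS
    rwa [Finset.card_image_of_injective _ Subtype.val_injective, nbhd,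
      Finset.image_biUnion] at h2
  obtain ⟨f, hinj, hf⟩ := (Finset.all_card_le_biUnion_card_iff_exists_injective
      (fun v : I => (hlf v.1).toFinset)).1 hall
  exact ⟨f, hinj, fun v => (hlf _).mem_toFinset.1 (hf v)⟩

end TransversalProof

theorem leftLocallyFinite_transversal_finitary {V W : Type*} (E : Set (V × W))
    (hlf : ∀ v : V, {w | (v, w) ∈ E}.Finite) :
    ∃ M : Matroid V, M.E = Set.univ ∧ (∀ I, M.Indep I ↔ Matchable E I) ∧
      (∀ I : Set V, (∀ J ⊆ I, J.Finite → Matchable E J) → Matchable E I) ∧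
      M.Finitary := by
    classical
  have compact : ∀ I : Set V, (∀ J ⊆ I, J.Finite → Matchable E J) → Matchable E I :=
    matchable_compact hlf
  have aug : ∀ ⦃I J : Set V⦄, Matchable E I → I.Finite → Matchable E J → J.Finite →
      I.ncard < J.ncard → ∃ e ∈ J, e ∉ I ∧ Matchable E (insert e I) := by
    intro I J hI hIfin hJ hJfin hlt
    have hI' : Matchable E (↑hIfin.toFinset : Set V) := by rwa [Set.Finite.coe_toFinset]
    have hJ' : Matchable E (↑hJfin.toFinset : Set V) := by rwa [Set.Finite.coe_toFinset]
    have hlt' : hIfin.toFinset.card < hJfin.toFinset.card := by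
      rwa [Set.ncard_eq_toFinset_card I hIfin, Set.ncard_eq_toFinset_card J hJfin] at hlt
    obtain ⟨e, heJ, heI, hm⟩ := matchable_aug hlf hI' hJ' hlt'
    refine ⟨e, hJfin.mem_toFinset.1 heJ, fun h => heI (hIfin.mem_toFinset.2 h), ?_⟩
    rwa [Finset.coe_insert, Set.Finite.coe_toFinset] at hm
  refine ⟨(IndepMatroid.ofFinitaryCardAugment Set.univ (Matchable E) matchable_empty
      (fun I J hJ hIJ => hJ.mono hIJ) aug compact (fun I _ => Set.subset_univ I)).matroid,
    rfl, fun I => Iff.rfl, compact, ?_⟩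
  exact IndepMatroid.ofFinitaryCardAugment_finitary _ _ _ _ _ _ _
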